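/- Let μ be a probability measure on ℝ, let s : ℝ → ℝ be nondecreasing, bounded and measurable, and let p : ℝ → ℝ be nonincreasing and measurable with 0 ≤ p(θ) ≤ 1 for all θ. Let θ⁻ < θ⁺ be reals such that m₋ = μ((−∞, θ⁻]) > 0 and m₊ = μ([θ⁺, ∞)) > 0, and let δ_s > 0 and δ_p > 0 satisfy s(θ⁺) − s(θ⁻) ≥ δ_s and p(θ⁻) − p(θ⁺) ≥ δ_p. Then ∫ s·p dμ − (∫ s dμ)·(∫ p dμ) ≤ −δ_s · δ_p · m₋ · m₊. -/

import Mathlib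

open MeasureTheory

lemma int_of_bdd {α : Type*} [MeasurableSpace α] (μ : Measure α) [IsFiniteMeasure μ]
    {f : α → ℝ} (hf : Measurable f) (C : ℝ) (h : ∀ x, |f x| ≤ C) : Integrable f μ :=
  (integrable_const C).mono' hf.aestronglyMeasurable (Filter.Eventually.of_forall h)

/-- The quantitative FKG–Chebyshev covariance bound from the proof of
Proposition 4.1: for a nondecreasing bounded `s` and a nonincreasing
`[0,1]`-valued `p`, with mass `m₋` below `θ⁻`, mass `m₊` above `θ⁺`, and gaps
`δ_s`, `δ_p`, the covariance is at most `−δ_s·δ_p·m₋·m₊`. -/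
theorem fkg_covariance_bound
    (μ : Measure ℝ) [IsProbabilityMeasure μ]
    (s p : ℝ → ℝ)
    (hs_mono : Monotone s) (hs_meas : Measurable s)
    (hs_bdd : ∃ C : ℝ, ∀ θ, |s θ| ≤ C)
    (hp_anti : Antitone p) (hp_meas : Measurable p)
    (hp01 : ∀ θ, 0 ≤ p θ ∧ p θ ≤ 1)
    (θm θp : ℝ) (hθ : θm < θp)
    (hmm : 0 < (μ (Set.Iic θm)).toReal)
    (hmp : 0 < (μ (Set.Ici θp)).toReal)
    (δs δp : ℝ) (hδs : 0 < δs) (hδp : 0 < δp)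
    (hgap_s : δs ≤ s θp - s θm)
    (hgap_p : δp ≤ p θm - p θp) :
    (∫ θ, s θ * p θ ∂μ) - (∫ θ, s θ ∂μ) * (∫ θ, p θ ∂μ) ≤
      -δs * δp * (μ (Set.Iic θm)).toReal * (μ (Set.Ici θp)).toReal := by
  obtain ⟨C, hC⟩ := hs_bdd
  have hC0 : 0 ≤ C := le_trans (abs_nonneg _) (hC 0)
  set ν : Measure (ℝ × ℝ) := μ.prod μ with hν
  set F : ℝ × ℝ → ℝ := fun z => (s z.1 - s z.2) * (p z.1 - p z.2) with hF
  -- boundedness facts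
  have hpb : ∀ x, |p x| ≤ 1 := by
    intro x
    have := hp01 x
    rw [abs_le]; constructor <;> linarith [this.1, this.2]
  have hsp_bdd : ∀ x, |s x * p x| ≤ C := by
    intro x
    rw [abs_mul]
    calc |s x| * |p x| ≤ C * 1 := mul_le_mul (hC x) (hpb x) (abs_nonneg _) hC0
    _ = C := mul_one C
  -- integrability over μ
  have hs_int : Integrable s μ := int_of_bdd μ hs_meas C hC
  have hp_int : Integrable p μ := int_of_bdd μ hp_meas 1 hpb
  have hsp_int : Integrable (fun x => s x * p x) μ :=
    int_of_bdd μ (hs_meas.mul hp_meas) C hsp_bdd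
  -- measurability over the product
  have hm1 : Measurable fun z : ℝ × ℝ => s z.1 * p z.1 :=
    ((hs_meas.comp measurable_fst).mul (hp_meas.comp measurable_fst))
  have hm2 : Measurable fun z : ℝ × ℝ => s z.2 * p z.2 :=
    ((hs_meas.comp measurable_snd).mul (hp_meas.comp measurable_snd))
  have hm3 : Measurable fun z : ℝ × ℝ => s z.1 * p z.2 :=
    ((hs_meas.comp measurable_fst).mul (hp_meas.comp measurable_snd))
  have hm4 : Measurable fun z : ℝ × ℝ => s z.2 * p z.1 :=
    ((hs_meas.comp measurable_snd).mul (hp_meas.comp measurable_fst))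
  have hb1 : ∀ z : ℝ × ℝ, |s z.1 * p z.1| ≤ C := fun z => hsp_bdd z.1
  have hb2 : ∀ z : ℝ × ℝ, |s z.2 * p z.2| ≤ C := fun z => hsp_bdd z.2
  have hbmix : ∀ x y : ℝ, |s x * p y| ≤ C := by
    intro x y; rw [abs_mul]
    calc |s x| * |p y| ≤ C * 1 := mul_le_mul (hC x) (hpb y) (abs_nonneg _) hC0
    _ = C := mul_one C
  have hi1 : Integrable (fun z : ℝ × ℝ => s z.1 * p z.1) ν := int_of_bdd ν hm1 C hb1
  have hi2 : Integrable (fun z : ℝ × ℝ => s z.2 * p z.2) ν := int_of_bdd ν hm2 C hb2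
  have hi3 : Integrable (fun z : ℝ × ℝ => s z.1 * p z.2) ν :=
    int_of_bdd ν hm3 C (fun z => hbmix z.1 z.2)
  have hi4 : Integrable (fun z : ℝ × ℝ => s z.2 * p z.1) ν :=
    int_of_bdd ν hm4 C (fun z => hbmix z.2 z.1)
  have hFmeas : Measurable F := by
    apply Measurable.mul
    · exact (hs_meas.comp measurable_fst).sub (hs_meas.comp measurable_snd)
    · exact (hp_meas.comp measurable_fst).sub (hp_meas.comp measurable_snd)
  have hFbdd : ∀ z : ℝ × ℝ, |F z| ≤ (2 * C) * 2 := by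
    intro z
    rw [hF, abs_mul]
    have h1 : |s z.1 - s z.2| ≤ 2 * C := by
      calc |s z.1 - s z.2| ≤ |s z.1| + |s z.2| := abs_sub _ _
      _ ≤ 2 * C := by linarith [hC z.1, hC z.2]
    have h2 : |p z.1 - p z.2| ≤ 2 := by
      calc |p z.1 - p z.2| ≤ |p z.1| + |p z.2| := abs_sub _ _
      _ ≤ 2 := by linarith [hpb z.1, hpb z.2]
    exact mul_le_mul h1 h2 (abs_nonneg _) (by linarith)
  have hFint : Integrable F ν := int_of_bdd ν hFmeas _ hFbdd
  -- the value of ∫ F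
  have heq1 : (∫ z, s z.1 * p z.1 ∂ν) = ∫ x, s x * p x ∂μ := by
    have : (∫ z, s z.1 * p z.1 ∂ν)
        = (∫ x, (fun x => s x * p x) x ∂μ) * ∫ y, (1:ℝ) ∂μ := by
      rw [← integral_prod_mul (fun x => s x * p x) (fun _ => (1:ℝ))]
      simp [hν]
    simpa using this
  have heq2 : (∫ z, s z.2 * p z.2 ∂ν) = ∫ x, s x * p x ∂μ := by
    have : (∫ z, (fun _ => (1:ℝ)) z.1 * (fun y => s y * p y) z.2 ∂ν)
        = (∫ x, (1:ℝ) ∂μ) * ∫ y, s y * p y ∂μ :=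
      integral_prod_mul (fun _ => (1:ℝ)) (fun y => s y * p y)
    simpa using this
  have heq3 : (∫ z, s z.1 * p z.2 ∂ν) = (∫ x, s x ∂μ) * ∫ y, p y ∂μ := by
    rw [hν]; exact integral_prod_mul (μ := μ) (ν := μ) s p
  have heq4 : (∫ z, s z.2 * p z.1 ∂ν) = (∫ x, s x ∂μ) * ∫ y, p y ∂μ := by
    have : (∫ z : ℝ × ℝ, p z.1 * s z.2 ∂ν) = (∫ x, p x ∂μ) * ∫ y, s y ∂μ := by
      rw [hν]; exact integral_prod_mul (μ := μ) (ν := μ) p s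
    rw [show (∫ z : ℝ × ℝ, s z.2 * p z.1 ∂ν) = ∫ z : ℝ × ℝ, p z.1 * s z.2 ∂ν from by
      congr 1; funext z; ring]
    rw [this]; ring
  have hFsplit : ∀ z : ℝ × ℝ, F z =
      s z.1 * p z.1 + s z.2 * p z.2 - s z.1 * p z.2 - s z.2 * p z.1 := by
    intro z; rw [hF]; ring
  have hFval : (∫ z, F z ∂ν) =
      2 * ((∫ x, s x * p x ∂μ) - (∫ x, s x ∂μ) * ∫ x, p x ∂μ) := by
    calc (∫ z, F z ∂ν)
        = ∫ z, (s z.1 * p z.1 + s z.2 * p z.2 - s z.1 * p z.2 - s z.2 * p z.1) ∂ν := by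
          congr 1; funext z; exact hFsplit z
      _ = (∫ z, s z.1 * p z.1 ∂ν) + (∫ z, s z.2 * p z.2 ∂ν)
          - (∫ z, s z.1 * p z.2 ∂ν) - ∫ z, s z.2 * p z.1 ∂ν := by
          have hi12 : Integrable (fun z : ℝ × ℝ => s z.1 * p z.1 + s z.2 * p z.2) ν :=
            hi1.add hi2
          have hi123 : Integrable
              (fun z : ℝ × ℝ => s z.1 * p z.1 + s z.2 * p z.2 - s z.1 * p z.2) ν :=
            hi12.sub hi3
          rw [integral_sub hi123 hi4, integral_sub hi12 hi3, integral_add hi1 hi2]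
      _ = 2 * ((∫ x, s x * p x ∂μ) - (∫ x, s x ∂μ) * ∫ x, p x ∂μ) := by
          rw [heq1, heq2, heq3, heq4]; ring
  -- pointwise bounds
  have hF0 : ∀ z : ℝ × ℝ, F z ≤ 0 := by
    intro ⟨x, y⟩
    show (s x - s y) * (p x - p y) ≤ 0
    rcases le_total x y with h | h
    · have h1 : s x ≤ s y := hs_mono h
      have h2 : p y ≤ p x := hp_anti h
      nlinarith
    · have h1 : s y ≤ s x := hs_mono h
      have h2 : p x ≤ p y := hp_anti h
      nlinarith
  have hcorner : ∀ x y : ℝ, x ≤ θm → θp ≤ y →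
      (s x - s y) * (p x - p y) ≤ -(δs * δp) := by
    intro x y hx hy
    have ha : s x - s y ≤ -δs := by
      have := hs_mono hx; have := hs_mono hy; linarith
    have hb : δp ≤ p x - p y := by
      have := hp_anti hx; have := hp_anti hy; linarith
    nlinarith
  -- corner sets
  set A1 : Set (ℝ × ℝ) := Set.Iic θm ×ˢ Set.Ici θp with hA1
  set A2 : Set (ℝ × ℝ) := Set.Ici θp ×ˢ Set.Iic θm with hA2
  set A : Set (ℝ × ℝ) := A1 ∪ A2 with hA
  have hA1m : MeasurableSet A1 := measurableSet_Iic.prod measurableSet_Ici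
  have hA2m : MeasurableSet A2 := measurableSet_Ici.prod measurableSet_Iic
  have hAm : MeasurableSet A := hA1m.union hA2m
  have hdisj : Disjoint A1 A2 := by
    rw [Set.disjoint_left]
    rintro ⟨x, y⟩ ⟨hx, _⟩ ⟨hx', _⟩
    exact absurd (le_trans hx' hx) (not_le.mpr hθ)
  set g : ℝ × ℝ → ℝ := A.indicator (fun _ => -(δs * δp)) with hg
  have hFg : ∀ z, F z ≤ g z := by
    intro z
    by_cases hz : z ∈ A
    · rw [hg, Set.indicator_of_mem hz]
      rcases hz with hz | hz
      · exact hcorner z.1 z.2 hz.1 hz.2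
      · have := hcorner z.2 z.1 hz.2 hz.1
        show (s z.1 - s z.2) * (p z.1 - p z.2) ≤ -(δs * δp)
        nlinarith
    · rw [hg, Set.indicator_of_notMem hz]
      exact hF0 z
  have hgint : Integrable g ν := (integrable_const _).indicator hAm
  have hIF : (∫ z, F z ∂ν) ≤ ∫ z, g z ∂ν := integral_mono hFint hgint hFg
  -- compute ∫ g
  have hgval : (∫ z, g z ∂ν) = (ν A).toReal • (-(δs * δp)) := by
    rw [hg]; exact integral_indicator_const _ hAm
  have hνA : (ν A).toReal =
      2 * (μ (Set.Iic θm)).toReal * (μ (Set.Ici θp)).toReal := by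
    have h1 : ν A1 = μ (Set.Iic θm) * μ (Set.Ici θp) := Measure.prod_prod _ _
    have h2 : ν A2 = μ (Set.Ici θp) * μ (Set.Iic θm) := Measure.prod_prod _ _
    have hne1 : μ (Set.Iic θm) ≠ ⊤ := measure_ne_top _ _
    have hne2 : μ (Set.Ici θp) ≠ ⊤ := measure_ne_top _ _
    rw [hA, measure_union hdisj hA2m, h1, h2,
      ENNReal.toReal_add (ENNReal.mul_ne_top hne1 hne2) (ENNReal.mul_ne_top hne2 hne1),
      ENNReal.toReal_mul, ENNReal.toReal_mul]
    ring
  have hfinal : (∫ z, F z ∂ν) ≤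
      2 * (μ (Set.Iic θm)).toReal * (μ (Set.Ici θp)).toReal * (-(δs * δp)) := by
    calc (∫ z, F z ∂ν) ≤ ∫ z, g z ∂ν := hIF
      _ = (ν A).toReal • (-(δs * δp)) := hgval
      _ = 2 * (μ (Set.Iic θm)).toReal * (μ (Set.Ici θp)).toReal * (-(δs * δp)) := by
          rw [hνA, smul_eq_mul]
  rw [hFval] at hfinal
  linarith
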